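/- Let Γ' be a countable group acting measurably on a measure space (α, μ) by measure-preserving transformations, and let Γ be a subgroup of Γ'. If t ⊆ α is a fundamental domain for the Γ-action with μ(t) < ∞, and s ⊆ α is a fundamental domain for the Γ'-action with μ(s) > 0, then Γ has finite index in Γ'. (This underlies the paper's discussion of overlattices: a lattice containing a lattice has finite index.) -/

import Mathlib

open MeasureTheory Pointwise

/-- Let `Γ'` be a countable group acting measurably on a measure space `(α, μ)`
by measure-preserving transformations, and let `Γ ≤ Γ'` be a subgroup.  If `t` is a fundamental
domain for the `Γ`-action with `μ(t) < ∞` and `s` is a fundamental domain for the `Γ'`-action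
with `μ(s) > 0`, then `Γ` has finite index in `Γ'`. -/
theorem finite_index_of_finite_covolume
    {Γ' α : Type*} [Group Γ'] [Countable Γ'] [MulAction Γ' α]
    [MeasurableSpace α] {μ : Measure α}
    (hmeas : ∀ γ : Γ', Measurable fun x : α => γ • x)
    [SMulInvariantMeasure Γ' α μ]
    (Γ : Subgroup Γ')
    {s t : Set α}
    (ht : IsFundamentalDomain Γ t μ) (hμt : μ t < ⊤)
    (hs : IsFundamentalDomain Γ' s μ) (hμs : 0 < μ s) :
    Γ.index ≠ 0 := by
  intro hΓ
  letI : MeasurableSpace Γ' := ⊤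
  haveI : MeasurableSMul Γ' α := { measurable_const_smul := fun c => hmeas c, measurable_smul_const := fun _ => measurable_from_top }
  letI : MeasurableSpace Γ := ⊤
  haveI : MeasurableSMul Γ α := { measurable_const_smul := fun c => hmeas (c : Γ'), measurable_smul_const := fun _ => measurable_from_top }
  haveI : SMulInvariantMeasure Γ α μ :=
    ⟨fun c _ hs => SMulInvariantMeasure.measure_preimage_smul (μ := μ) (c : Γ') hs⟩
  -- the space of right cosets is infinite
  have hQL : Infinite (Γ' ⧸ Γ) := by
    have h0 : Nat.card (Γ' ⧸ Γ) = 0 := hΓ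
    rcases Nat.card_eq_zero.mp h0 with h | h
    · exact (h.false ((1 : Γ') : Γ' ⧸ Γ)).elim
    · exact h
  have hQ : Infinite (Quotient (QuotientGroup.rightRel Γ)) :=
    Equiv.infinite_iff (QuotientGroup.quotientRightRelEquivQuotientLeftRel Γ) |>.mpr hQL
  -- the bijection Γ × Q ≃ Γ', (γ, q) ↦ γ * q.out
  set Q := Quotient (QuotientGroup.rightRel Γ) with hQdef
  have hbij : Function.Bijective (fun p : Γ × Q => (p.1 : Γ') * p.2.out) := by
    constructor
    · rintro ⟨γ₁, q₁⟩ ⟨γ₂, q₂⟩ h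
      simp only at h
      have hq : q₁ = q₂ := by
        apply Quotient.out_equiv_out.mp
        apply QuotientGroup.rightRel_apply.mpr
        have hout : q₂.out = ((γ₂ : Γ')⁻¹ * γ₁) * q₁.out := by
          rw [mul_assoc, h, ← mul_assoc, inv_mul_cancel, one_mul]
        rw [hout, mul_assoc, mul_inv_cancel, mul_one]
        exact Γ.mul_mem (Γ.inv_mem γ₂.2) γ₁.2
      subst hq
      have : (γ₁ : Γ') = γ₂ := mul_right_cancel h
      exact Prod.ext (Subtype.ext this) rfl
    · intro g
      have hmem : g * (Quotient.mk (QuotientGroup.rightRel Γ) g).out⁻¹ ∈ Γ := by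
        have : (QuotientGroup.rightRel Γ) (Quotient.mk (QuotientGroup.rightRel Γ) g).out g :=
          Quotient.exact (Quotient.out_eq _)
        exact QuotientGroup.rightRel_apply.mp this
      exact ⟨⟨⟨_, hmem⟩, Quotient.mk _ g⟩, by simp⟩
  set e : Γ × Q ≃ Γ' := Equiv.ofBijective _ hbij with he
  -- inner sums
  set F : Γ → Q → ENNReal := fun γ q => μ (t ∩ ((γ : Γ') * q.out) • s) with hF
  have key : ∀ q : Q, ∑' γ : Γ, F γ q = μ s := by
    intro q
    have h1 : ∀ γ : Γ, F γ q = μ (q.out • s ∩ (γ : Γ)⁻¹ • t) := by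
      intro γ
      show μ (t ∩ ((γ : Γ') * q.out) • s) = μ (q.out • s ∩ (γ : Γ)⁻¹ • t)
      rw [← measure_smul (G := Γ') μ (γ : Γ')⁻¹ (t ∩ ((γ : Γ') * q.out) • s),
        Set.smul_set_inter, smul_smul, inv_mul_cancel_left, Set.inter_comm]
      rfl
    calc ∑' γ : Γ, F γ q
        = ∑' γ : Γ, μ (q.out • s ∩ (γ : Γ)⁻¹ • t) := tsum_congr h1
      _ = ∑' γ : Γ, μ (q.out • s ∩ γ • t) :=
          Equiv.tsum_eq (Equiv.inv Γ) (fun γ : Γ => μ (q.out • s ∩ γ • t))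
      _ = μ (q.out • s) := (ht.measure_eq_tsum' (q.out • s)).symm
      _ = μ s := measure_smul (G := Γ') μ (q.out) s
  have hμteq : μ t = ⊤ := by
    calc μ t = ∑' g : Γ', μ (t ∩ g • s) := hs.measure_eq_tsum' t
      _ = ∑' p : Γ × Q, F p.1 p.2 := (e.tsum_eq (fun g : Γ' => μ (t ∩ g • s))).symm
      _ = ∑' γ : Γ, ∑' q : Q, F γ q := ENNReal.tsum_prod
      _ = ∑' q : Q, ∑' γ : Γ, F γ q := ENNReal.tsum_comm
      _ = ∑' _ : Q, μ s := tsum_congr key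
      _ = ⊤ := ENNReal.tsum_const_eq_top_of_ne_zero hμs.ne'
  exact absurd hμteq hμt.ne
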